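/- Let $R$ be a commutative ring, $d \in R$, $n \in \mathbb{N}$, and let $S \in R[t]$ be a polynomial of degree at most $n$, viewed as an element of $R[[t]]$. For $0 \le i \le n$ let $a_i$ be the coefficient of $t^i$ in $T_{-d}(S)$. Then $\sum_{i=0}^n a_i\, t^i\, (1+d t)^{n-i} \equiv (1+d t)^{n+1}\, S(t) \pmod{t^{n+1}}$, i.e., the coefficients of $t^m$ on the two sides agree for all $0 \le m \le n$. (This is the formal content of the identity $A(H) = \left[(1+dH)^{n+1} S_Z(H)\right]_n + d^{n+1}H^{n+1}$ relating the numerator of the Segre zeta function to the polynomial $S_Z$ with $\iota_* s(Z,\mathbb{P}^n) = S_Z(H) \cap [\mathbb{P}^n]$, where $[\cdot]_n$ denotes truncation to degree $n$.) -/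

import Mathlib

open PowerSeries Finset

/-- The power series `1 + λ t`. -/
noncomputable def oneAdd {R : Type*} [CommRing R] (l : R) : PowerSeries R :=
  1 + PowerSeries.C l * PowerSeries.X

/-- The inverse power series `(1 + λ t)⁻¹`, via `invOfUnit` (constant coefficient `1`). -/
noncomputable def invOneAdd {R : Type*} [CommRing R] (l : R) : PowerSeries R :=
  PowerSeries.invOfUnit (oneAdd l) 1

/-- The tensor operation `T_λ`, defined coefficientwise:
`T_λ(∑ aᵢ tⁱ) = ∑ aᵢ tⁱ (1+λt)^{-(i+1)}`; the coefficient of `t^m` is the finite sum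
`∑_{i=0}^m aᵢ · [t^{m-i}] (1+λt)^{-(i+1)}`. -/
noncomputable def T {R : Type*} [CommRing R] (l : R) (F : PowerSeries R) : PowerSeries R :=
  PowerSeries.mk fun m => ∑ i ∈ Finset.range (m + 1),
    PowerSeries.coeff i F * PowerSeries.coeff (m - i) (invOneAdd l ^ (i + 1))

lemma oneAdd_mul_invOneAdd {R : Type*} [CommRing R] (l : R) :
    oneAdd l * invOneAdd l = 1 := by
  apply PowerSeries.mul_invOfUnit
  simp [oneAdd]

lemma invOneAdd_eq {R : Type*} [CommRing R] (l : R) :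
    invOneAdd l = PowerSeries.mk fun k => (-l) ^ k := by
  have h : oneAdd l * PowerSeries.mk (fun k => (-l) ^ k) = 1 := by
    ext m
    cases m with
    | zero => simp [oneAdd]
    | succ k =>
        simp [oneAdd, add_mul, mul_assoc, PowerSeries.coeff_succ_X_mul, pow_succ]
        ring
  calc invOneAdd l = invOneAdd l * (oneAdd l * PowerSeries.mk fun k => (-l) ^ k) := by
        rw [h, mul_one]
    _ = (oneAdd l * invOneAdd l) * PowerSeries.mk fun k => (-l)^k := by ring
    _ = _ := by rw [oneAdd_mul_invOneAdd, one_mul]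

lemma hockey (q k : ℕ) : ∑ a ∈ range (k+1), (q+a).choose a = (q+1+k).choose k := by
  induction k with
  | zero => simp
  | succ k ih =>
      have h1 : q + (k+1) = q+1+k := by omega
      rw [Finset.sum_range_succ, ih, h1, ← Nat.choose_succ_succ]
      rfl

lemma coeff_invOneAdd_pow {R : Type*} [CommRing R] (l : R) (q k : ℕ) :
    PowerSeries.coeff k (invOneAdd l ^ (q+1)) = ((q+k).choose k : R) * (-l) ^ k := by
  induction q generalizing k with
  | zero => simp [invOneAdd_eq]
  | succ q ih =>
      have : invOneAdd l ^ (q+1+1) = invOneAdd l ^ (q+1) * invOneAdd l := by ring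
      rw [this, PowerSeries.coeff_mul, Finset.Nat.sum_antidiagonal_eq_sum_range_succ_mk]
      have : ∀ a ∈ range (k+1),
          PowerSeries.coeff a (invOneAdd l ^ (q+1)) * PowerSeries.coeff (k-a) (invOneAdd l)
          = ((q+a).choose a : R) * (-l)^k := by
        intro a ha
        have hak : a ≤ k := Nat.lt_succ_iff.mp (Finset.mem_range.mp ha)
        rw [ih, invOneAdd_eq]
        simp only [PowerSeries.coeff_mk]
        rw [mul_assoc, ← pow_add, Nat.add_sub_cancel' hak]
      rw [Finset.sum_congr rfl this, ← Finset.sum_mul, ← Nat.cast_sum, hockey]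

lemma coeff_oneAdd_pow {R : Type*} [CommRing R] (d : R) (q k : ℕ) :
    PowerSeries.coeff k (oneAdd d ^ q) = (q.choose k : R) * d ^ k := by
  induction q generalizing k with
  | zero =>
      cases k <;> simp [PowerSeries.coeff_one, Nat.choose]
  | succ q ih =>
      have : oneAdd d ^ (q+1) = oneAdd d ^ q + PowerSeries.C d * (oneAdd d ^ q * X) := by
        rw [pow_succ]; unfold oneAdd; ring
      rw [this, map_add, PowerSeries.coeff_C_mul]
      cases k with
      | zero =>
          have : PowerSeries.coeff 0 (oneAdd d ^ q * X) = 0 := by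
            rw [PowerSeries.coeff_zero_eq_constantCoeff]
            simp
          rw [this, ih]; simp
      | succ k =>
          rw [PowerSeries.coeff_succ_mul_X, ih, ih]
          rw [Nat.choose_succ_succ']
          push_cast
          ring


lemma coeff_mul_congr {R : Type*} [CommRing R] (A B C' : PowerSeries R) (m : ℕ)
    (h : ∀ i ≤ m, PowerSeries.coeff i A = PowerSeries.coeff i B) :
    PowerSeries.coeff m (A * C') = PowerSeries.coeff m (B * C') := by
  rw [PowerSeries.coeff_mul, PowerSeries.coeff_mul]
  refine Finset.sum_congr rfl fun p hp => ?_
  rw [Finset.HasAntidiagonal.mem_antidiagonal] at hp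
  rw [h p.1 (by omega)]

lemma coeff_T_eq {R : Type*} [CommRing R] (l : R) (S : Polynomial R) (n : ℕ)
    (hS : S.natDegree ≤ n) (m : ℕ) (hm : m ≤ n) :
    PowerSeries.coeff m (T l (S : PowerSeries R)) =
      PowerSeries.coeff m (∑ j ∈ range (n+1),
        PowerSeries.C (PowerSeries.coeff j (S : PowerSeries R)) *
          (invOneAdd l ^ (j+1) * PowerSeries.X ^ j)) := by
  rw [T, PowerSeries.coeff_mk, map_sum]
  have key : ∀ j ∈ range (n+1),
      PowerSeries.coeff m (PowerSeries.C (PowerSeries.coeff j (S : PowerSeries R)) *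
          (invOneAdd l ^ (j+1) * PowerSeries.X ^ j)) =
      if j ≤ m then PowerSeries.coeff j (S : PowerSeries R) *
          PowerSeries.coeff (m-j) (invOneAdd l ^ (j+1)) else 0 := by
    intro j _
    have h1 : PowerSeries.C (PowerSeries.coeff j (S : PowerSeries R)) *
          (invOneAdd l ^ (j+1) * PowerSeries.X ^ j)
        = (PowerSeries.C (PowerSeries.coeff j (S : PowerSeries R)) *
            invOneAdd l ^ (j+1)) * PowerSeries.X ^ j := by ring
    rw [h1, PowerSeries.coeff_mul_X_pow', PowerSeries.coeff_C_mul]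
  rw [Finset.sum_congr rfl key,
    ← Finset.sum_subset (Finset.range_subset_range.mpr (by omega : m + 1 ≤ n + 1))
      (fun j _ hj => by
        rw [if_neg]
        simp only [Finset.mem_range] at hj
        omega)]
  exact Finset.sum_congr rfl fun i hi => by
    rw [if_pos (by simp only [Finset.mem_range] at hi; omega)]

/-- The numerator of the Segre zeta function: if `aᵢ = [tⁱ] T_{-d}(S)` then
`∑_{i=0}^n aᵢ tⁱ (1+dt)^{n-i} ≡ (1+dt)^{n+1} S(t) (mod t^{n+1})`. -/
theorem segre_zeta_numerator {R : Type*} [CommRing R] (d : R) (n : ℕ) (S : Polynomial R)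
    (hS : S.natDegree ≤ n) (a : ℕ → R)
    (ha : ∀ i, a i = PowerSeries.coeff i (T (-d) (S : PowerSeries R))) :
    ∀ m ≤ n,
      PowerSeries.coeff m (∑ i ∈ Finset.range (n + 1),
          PowerSeries.C (a i) * PowerSeries.X ^ i * oneAdd d ^ (n - i)) =
        PowerSeries.coeff m (oneAdd d ^ (n + 1) * (S : PowerSeries R)) := by
  intro m hm
  set w : PowerSeries R := invOneAdd (-d) with hw
  -- Step A : LHS as a finite sum over range (m+1)
  have hA : ∀ i ∈ range (n+1),
      PowerSeries.coeff m (PowerSeries.C (a i) * PowerSeries.X ^ i * oneAdd d ^ (n-i)) =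
      if i ≤ m then a i * PowerSeries.coeff (m-i) (w ^ (n-m+1)) else 0 := by
    intro i hi
    simp only [Finset.mem_range] at hi
    have h1 : PowerSeries.C (a i) * PowerSeries.X ^ i * oneAdd d ^ (n-i)
        = (PowerSeries.C (a i) * oneAdd d ^ (n-i)) * PowerSeries.X ^ i := by ring
    rw [h1, PowerSeries.coeff_mul_X_pow', PowerSeries.coeff_C_mul]
    split_ifs with h
    · have h2 : n - m + 1 = (n - m) + 1 := rfl
      rw [coeff_oneAdd_pow, hw, h2, coeff_invOneAdd_pow, neg_neg]
      have h3 : n - m + (m - i) = n - i := by omega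
      rw [h3]
    · rfl
  rw [map_sum, Finset.sum_congr rfl hA,
    ← Finset.sum_subset (Finset.range_subset_range.mpr (by omega : m + 1 ≤ n + 1))
      (fun j _ hj => by
        rw [if_neg]
        simp only [Finset.mem_range] at hj
        omega),
    Finset.sum_congr rfl (fun i hi => if_pos (by simp only [Finset.mem_range] at hi; omega))]
  -- Step B : this sum is coeff m of (T (-d) S) * w^(n-m+1)
  have hB : ∑ i ∈ range (m+1), a i * PowerSeries.coeff (m-i) (w ^ (n-m+1))
      = PowerSeries.coeff m (T (-d) (S : PowerSeries R) * w ^ (n-m+1)) := by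
    rw [PowerSeries.coeff_mul, Finset.Nat.sum_antidiagonal_eq_sum_range_succ_mk]
    exact Finset.sum_congr rfl fun i hi => by rw [ha i]
  rw [hB]
  -- Step C : replace T (-d) S by the finite sum H
  have hC := coeff_mul_congr (T (-d) (S : PowerSeries R))
    (∑ j ∈ range (n+1), PowerSeries.C (PowerSeries.coeff j (S : PowerSeries R)) *
      (w ^ (j+1) * PowerSeries.X ^ j)) (w ^ (n-m+1)) m
    (fun i him => coeff_T_eq (-d) S n hS i (le_trans him hm))
  rw [hC]
  -- Step D : expand the product
  have hD : (∑ j ∈ range (n+1), PowerSeries.C (PowerSeries.coeff j (S : PowerSeries R)) *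
      (w ^ (j+1) * PowerSeries.X ^ j)) * w ^ (n-m+1)
      = ∑ j ∈ range (n+1), PowerSeries.C (PowerSeries.coeff j (S : PowerSeries R)) *
        (w ^ (n-m+j+2) * PowerSeries.X ^ j) := by
    rw [Finset.sum_mul]
    refine Finset.sum_congr rfl fun j _ => ?_
    have h4 : n - m + j + 2 = (j + 1) + (n - m + 1) := by omega
    rw [h4, pow_add]
    ring
  rw [hD, map_sum]
  -- Step E : coefficient of the sum
  have hE : ∀ j ∈ range (n+1),
      PowerSeries.coeff m (PowerSeries.C (PowerSeries.coeff j (S : PowerSeries R)) *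
        (w ^ (n-m+j+2) * PowerSeries.X ^ j)) =
      if j ≤ m then PowerSeries.coeff j (S : PowerSeries R) *
        PowerSeries.coeff (m-j) (w ^ (n-m+j+2)) else 0 := by
    intro j _
    have h1 : PowerSeries.C (PowerSeries.coeff j (S : PowerSeries R)) *
        (w ^ (n-m+j+2) * PowerSeries.X ^ j)
        = (PowerSeries.C (PowerSeries.coeff j (S : PowerSeries R)) * w ^ (n-m+j+2)) *
          PowerSeries.X ^ j := by ring
    rw [h1, PowerSeries.coeff_mul_X_pow', PowerSeries.coeff_C_mul]
  rw [Finset.sum_congr rfl hE,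
    ← Finset.sum_subset (Finset.range_subset_range.mpr (by omega : m + 1 ≤ n + 1))
      (fun j _ hj => by
        rw [if_neg]
        simp only [Finset.mem_range] at hj
        omega),
    Finset.sum_congr rfl (fun j hj => if_pos (by simp only [Finset.mem_range] at hj; omega))]
  -- Step F : the right-hand side
  rw [mul_comm (oneAdd d ^ (n+1)) (S : PowerSeries R), PowerSeries.coeff_mul,
    Finset.Nat.sum_antidiagonal_eq_sum_range_succ_mk]
  refine Finset.sum_congr rfl fun j hj => ?_
  simp only [Finset.mem_range] at hj
  congr 1
  have h5 : n - m + j + 2 = (n - m + j + 1) + 1 := rfl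
  rw [h5, hw, coeff_invOneAdd_pow, neg_neg, coeff_oneAdd_pow]
  have h6 : n - m + j + 1 + (m - j) = n + 1 := by omega
  rw [h6]
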